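/- arXiv:2506.07089 — 2 statements merged into one kernel-verified Lean document; each statement's English description precedes it below -/
import Mathlib

section
/- For every ε > 0 there exists a constant K_ε such that for all real X ≥ 2, the number of pairs (A,B) ∈ ℤ^2 with |A| ≤ X, |B| ≤ X, satisfying the minimality condition that for every prime p, if p^6 divides B then p^4 does not divide A, and such that the polynomial x^3 + Ax + B is reducible over ℚ, is at most K_ε · X^{1+ε}. -/
open Polynomial

private lemma exists_int_root' (A B : ℤ)
    (h : ¬Irreducible ((X ^ 3 + C (A : ℚ) * X + C (B : ℚ) : Polynomial ℚ))) :
    ∃ z : ℤ, z ^ 3 + A * z + B = 0 := by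
  set P : Polynomial ℚ := X ^ 3 + C (A : ℚ) * X + C (B : ℚ) with hP
  have hdeg : P.natDegree = 3 := by rw [hP]; compute_degree!
  have hP0 : P ≠ 0 := fun h0 => by simp [h0] at hdeg
  have hroots : P.roots ≠ 0 := by
    intro h0
    exact h ((Polynomial.irreducible_iff_roots_eq_zero_of_degree_le_three
      (by omega) (by omega)).mpr h0)
  obtain ⟨r, hr⟩ := Multiset.exists_mem_of_ne_zero hroots
  have hroot : P.eval r = 0 := (Polynomial.mem_roots hP0).mp hr
  have heval : r ^ 3 + (A : ℚ) * r + (B : ℚ) = 0 := by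
    simpa [hP] using hroot
  have hint : IsIntegral ℤ r := by
    refine ⟨X ^ 3 + C A * X + C B, ?_, ?_⟩
    · monicity!
    · rw [← aeval_def]
      simp only [map_add, map_mul, map_pow, map_intCast, aeval_X, aeval_C,
        algebraMap_int_eq, eq_intCast]
      exact heval
  obtain ⟨z, hz⟩ := IsIntegrallyClosed.isIntegral_iff.mp hint
  have hz' : (z : ℚ) = r := by simpa using hz
  refine ⟨z, ?_⟩
  have : (z : ℚ) ^ 3 + (A : ℚ) * z + B = 0 := by rw [hz']; exact heval
  exact_mod_cast this

/-- The number of monic cubics `x³ + Ax + B` with integer coefficients `|A| ≤ X`,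
`|B| ≤ X`, satisfying the minimality condition (`p⁶ ∣ B → p⁴ ∤ A` for all primes `p`),
that are reducible over `ℚ`, is at most `K_ε · X^{1+ε}`. -/
theorem reducible_minimal_cubics_bound (ε : ℝ) (hε : 0 < ε) :
    ∃ K : ℝ, ∀ X : ℝ, 2 ≤ X →
      ({p : ℤ × ℤ | ((|p.1| : ℤ) : ℝ) ≤ X ∧ ((|p.2| : ℤ) : ℝ) ≤ X ∧
          (∀ q : ℕ, q.Prime → (q : ℤ) ^ 6 ∣ p.2 → ¬((q : ℤ) ^ 4 ∣ p.1)) ∧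
          ¬Irreducible ((Polynomial.X ^ 3 + Polynomial.C (p.1 : ℚ) * Polynomial.X +
            Polynomial.C (p.2 : ℚ) : Polynomial ℚ))}.ncard : ℝ) ≤
        K * X ^ (1 + ε) := by
  classical
  refine ⟨9 + 4 / ε, fun X hX => ?_⟩
  have hX0 : (0:ℝ) < X := by linarith
  have hX1 : (1:ℝ) ≤ X := by linarith
  set n : ℕ := ⌊X⌋₊ with hn
  have hn2 : 2 ≤ n := Nat.le_floor (by exact_mod_cast hX)
  have hnX : (n : ℝ) ≤ X := Nat.floor_le hX0.le
  have hn0 : (0:ℝ) < (n:ℝ) := by exact_mod_cast Nat.pos_of_ne_zero (by omega)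
  have habs : ∀ z : ℤ, ((|z| : ℤ) : ℝ) ≤ X → |z| ≤ (n : ℤ) := by
    intro z hz
    have h1 : |z| ≤ ⌊X⌋ := Int.le_floor.mpr hz
    rwa [← Int.natCast_floor_eq_floor hX0.le] at h1
  set g : ℤ × ℤ → ℤ × ℤ := fun q => (-q.1 ^ 2 - q.2, q.1 * q.2) with hg
  set T : Finset (ℤ × ℤ) :=
    (Finset.Icc 1 n).biUnion (fun r =>
      ({(r : ℤ), -(r : ℤ)} : Finset ℤ) ×ˢ
        Finset.Icc (-((n : ℤ) / (r : ℤ))) ((n : ℤ) / (r : ℤ))) with hT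
  set F : Finset (ℤ × ℤ) :=
    ((Finset.Icc (-(n : ℤ)) (n : ℤ)) ×ˢ ({0} : Finset ℤ)) ∪ T.image g with hF
  -- the set is contained in F
  have hsub : {p : ℤ × ℤ | ((|p.1| : ℤ) : ℝ) ≤ X ∧ ((|p.2| : ℤ) : ℝ) ≤ X ∧
          (∀ q : ℕ, q.Prime → (q : ℤ) ^ 6 ∣ p.2 → ¬((q : ℤ) ^ 4 ∣ p.1)) ∧
          ¬Irreducible ((Polynomial.X ^ 3 + Polynomial.C (p.1 : ℚ) * Polynomial.X +
            Polynomial.C (p.2 : ℚ) : Polynomial ℚ))} ⊆ (F : Set (ℤ × ℤ)) := by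
    rintro ⟨A, B⟩ ⟨hA, hB, -, hred⟩
    have hA' : |A| ≤ (n : ℤ) := habs A hA
    have hB' : |B| ≤ (n : ℤ) := habs B hB
    obtain ⟨z, hz⟩ := exists_int_root' A B hred
    rw [hF, Finset.coe_union, Set.mem_union]
    by_cases hB0 : B = 0
    · left
      simp only [Finset.mem_coe, Finset.mem_product, Finset.mem_Icc, Finset.mem_singleton]
      exact ⟨⟨(abs_le.mp hA').1, (abs_le.mp hA').2⟩, hB0⟩
    · right
      have hz0 : z ≠ 0 := by rintro rfl; apply hB0; simpa using hz
      have hzB : B = z * (-(z ^ 2 + A)) := by linear_combination hz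
      have hdvd : z ∣ B := ⟨-(z ^ 2 + A), hzB⟩
      have hzabs : |z| ≤ (n : ℤ) :=
        le_trans (Int.le_of_dvd (abs_pos.mpr hB0)
          ((abs_dvd _ _).mpr ((dvd_abs _ _).mpr hdvd))) hB'
      have habsz : |z| = (z.natAbs : ℤ) := Int.abs_eq_natAbs z
      have hrpos : (0:ℤ) < (z.natAbs : ℤ) := by
        exact_mod_cast Int.natAbs_pos.mpr hz0
      have hk : |(-(z ^ 2 + A))| ≤ (n : ℤ) / (z.natAbs : ℤ) := by
        rw [Int.le_ediv_iff_mul_le hrpos]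
        calc |(-(z ^ 2 + A))| * (z.natAbs : ℤ) = |(-(z ^ 2 + A))| * |z| := by
              rw [habsz]
          _ = |z * (-(z ^ 2 + A))| := by rw [abs_mul, mul_comm]
          _ = |B| := by rw [← hzB]
          _ ≤ (n : ℤ) := hB'
      refine Finset.mem_coe.mpr (Finset.mem_image.mpr ⟨(z, -(z ^ 2 + A)), ?_, ?_⟩)
      · rw [hT]
        refine Finset.mem_biUnion.mpr ⟨z.natAbs, Finset.mem_Icc.mpr ⟨?_, ?_⟩,
          Finset.mem_product.mpr ⟨?_, ?_⟩⟩
        · omega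
        · rw [habsz] at hzabs; exact_mod_cast hzabs
        · simp only [Finset.mem_insert, Finset.mem_singleton]
          exact Int.natAbs_eq z
        · exact Finset.mem_Icc.mpr ⟨(abs_le.mp hk).1, (abs_le.mp hk).2⟩
      · rw [hg]
        simp only [Prod.mk.injEq]
        exact ⟨by ring, hzB.symm⟩
  -- cardinality estimates
  have h0 : (({p : ℤ × ℤ | ((|p.1| : ℤ) : ℝ) ≤ X ∧ ((|p.2| : ℤ) : ℝ) ≤ X ∧
          (∀ q : ℕ, q.Prime → (q : ℤ) ^ 6 ∣ p.2 → ¬((q : ℤ) ^ 4 ∣ p.1)) ∧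
          ¬Irreducible ((Polynomial.X ^ 3 + Polynomial.C (p.1 : ℚ) * Polynomial.X +
            Polynomial.C (p.2 : ℚ) : Polynomial ℚ))}.ncard : ℝ)) ≤ (F.card : ℝ) := by
    have hfin := Set.ncard_le_ncard hsub F.finite_toSet
    rw [Set.ncard_coe_finset] at hfin
    exact_mod_cast hfin
  have hcard0 : (((Finset.Icc (-(n : ℤ)) (n : ℤ)) ×ˢ ({0} : Finset ℤ)).card : ℝ) ≤ 3 * X := by
    have : ((Finset.Icc (-(n : ℤ)) (n : ℤ)) ×ˢ ({0} : Finset ℤ)).card = 2 * n + 1 := by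
      rw [Finset.card_product, Int.card_Icc, Finset.card_singleton, mul_one]
      omega
    rw [this]
    push_cast
    linarith
  have hharm : ∑ r ∈ Finset.Icc 1 n, ((r:ℝ))⁻¹ ≤ 1 + Real.log X := by
    have h1 : (harmonic n : ℝ) = ∑ r ∈ Finset.Icc 1 n, ((r:ℝ))⁻¹ := by
      rw [harmonic_eq_sum_Icc]
      push_cast
      rfl
    rw [← h1]
    refine (harmonic_le_one_add_log n).trans ?_
    have : Real.log (n:ℝ) ≤ Real.log X := Real.log_le_log hn0 hnX
    linarith
  have hTcard : (T.card : ℝ) ≤ 4 * X * (1 + Real.log X) + 2 * X := by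
    have hstep : (T.card : ℝ) ≤ ∑ r ∈ Finset.Icc 1 n, (4 * (X / r) + 2) := by
      have h1 : T.card ≤ ∑ r ∈ Finset.Icc 1 n,
          ((({(r : ℤ), -(r : ℤ)} : Finset ℤ) ×ˢ
            Finset.Icc (-((n : ℤ) / (r : ℤ))) ((n : ℤ) / (r : ℤ))).card) := by
        rw [hT]; exact Finset.card_biUnion_le
      refine le_trans (Nat.cast_le.mpr h1) ?_
      rw [Nat.cast_sum]
      refine Finset.sum_le_sum ?_
      intro r hr
      obtain ⟨hr1, hrn⟩ := Finset.mem_Icc.mp hr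
      set k : ℤ := (n : ℤ) / (r : ℤ) with hkdef
      have hrpos : (0:ℤ) < (r:ℤ) := by exact_mod_cast hr1
      have hk0 : (0:ℤ) ≤ k := Int.ediv_nonneg (by positivity) hrpos.le
      have hcard : ((({(r : ℤ), -(r : ℤ)} : Finset ℤ) ×ˢ
          Finset.Icc (-k) k).card : ℝ) ≤ 2 * (2 * (k:ℝ) + 1) := by
        rw [Finset.card_product]
        have hc1 : ({(r : ℤ), -(r : ℤ)} : Finset ℤ).card ≤ 2 :=
          le_trans (Finset.card_insert_le _ _) (by simp)
        have hc2 : (Finset.Icc (-k) k).card = (2 * k + 1).toNat := by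
          rw [Int.card_Icc]; congr 1; ring
        rw [hc2]
        have hc3 : (((2 * k + 1).toNat : ℕ) : ℝ) = 2 * (k:ℝ) + 1 := by
          have := Int.toNat_of_nonneg (show (0:ℤ) ≤ 2 * k + 1 by omega)
          have h4 : (((2 * k + 1).toNat : ℤ) : ℝ) = ((2 * k + 1 : ℤ) : ℝ) := by
            exact_mod_cast congrArg (fun t : ℤ => (t : ℝ)) this
          push_cast at h4 ⊢
          linarith
        calc ((({(r : ℤ), -(r : ℤ)} : Finset ℤ).card * (2 * k + 1).toNat : ℕ) : ℝ)
            ≤ ((2 * (2 * k + 1).toNat : ℕ) : ℝ) := by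
              exact_mod_cast Nat.mul_le_mul_right _ hc1
          _ = 2 * (2 * (k:ℝ) + 1) := by rw [Nat.cast_mul, hc3]; push_cast; ring
      refine hcard.trans ?_
      have hkr : (k : ℝ) ≤ X / (r : ℝ) := by
        rw [le_div_iff₀ (by exact_mod_cast hrpos)]
        have hmul : k * (r:ℤ) ≤ (n:ℤ) := by
          have hmod := Int.emod_nonneg (n:ℤ) (by exact_mod_cast hrpos.ne' : (r:ℤ) ≠ 0)
          have hdm := Int.mul_ediv_add_emod (n:ℤ) (r:ℤ)
          nlinarith [hdm, hmod]
        have : ((k * (r:ℤ) : ℤ) : ℝ) ≤ ((n:ℤ) : ℝ) := by exact_mod_cast hmul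
        push_cast at this
        linarith
      linarith
    refine hstep.trans ?_
    have hsum : ∑ r ∈ Finset.Icc 1 n, (4 * (X / r) + 2)
        = 4 * X * (∑ r ∈ Finset.Icc 1 n, ((r:ℝ))⁻¹) + 2 * n := by
      have hcardIcc : (Finset.Icc 1 n).card = n := by rw [Nat.card_Icc]; omega
      rw [Finset.sum_add_distrib, Finset.sum_const, hcardIcc, nsmul_eq_mul]
      have hx : ∑ r ∈ Finset.Icc 1 n, (4 * (X / r)) = 4 * X * ∑ r ∈ Finset.Icc 1 n, ((r:ℝ))⁻¹ := by
        rw [Finset.mul_sum]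
        refine Finset.sum_congr rfl fun r _ => ?_
        rw [div_eq_mul_inv]; ring
      rw [hx]; ring
    rw [hsum]
    have h5 : 4 * X * (∑ r ∈ Finset.Icc 1 n, ((r:ℝ))⁻¹) ≤ 4 * X * (1 + Real.log X) := by
      refine mul_le_mul_of_nonneg_left hharm (by linarith)
    linarith
  have hFcard : (F.card : ℝ) ≤ 9 * X + 4 * X * Real.log X := by
    have h6 : F.card ≤ ((Finset.Icc (-(n : ℤ)) (n : ℤ)) ×ˢ ({0} : Finset ℤ)).card
        + (T.image g).card := by rw [hF]; exact Finset.card_union_le _ _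
    have h7 : (T.image g).card ≤ T.card := Finset.card_image_le
    have h8 : (F.card : ℝ) ≤ (((Finset.Icc (-(n : ℤ)) (n : ℤ)) ×ˢ ({0} : Finset ℤ)).card : ℝ)
        + (T.card : ℝ) := by exact_mod_cast le_trans h6 (by omega)
    refine h8.trans ?_
    have := hcard0
    have := hTcard
    nlinarith [hcard0, hTcard]
  refine h0.trans (hFcard.trans ?_)
  -- final rpow arithmetic
  have hXe : X ^ ((1:ℝ) + ε) = X * X ^ ε := by
    rw [Real.rpow_add hX0, Real.rpow_one]
  have hlog : Real.log X ≤ X ^ ε / ε := Real.log_le_rpow_div hX0.le hε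
  have hXle : X ≤ X ^ ((1:ℝ) + ε) := by
    calc X = X ^ (1:ℝ) := (Real.rpow_one X).symm
      _ ≤ X ^ ((1:ℝ) + ε) := Real.rpow_le_rpow_of_exponent_le hX1 (by linarith)
  have h9 : 4 * X * Real.log X ≤ (4 / ε) * X ^ ((1:ℝ) + ε) := by
    have h10 : 4 * X * Real.log X ≤ 4 * X * (X ^ ε / ε) :=
      mul_le_mul_of_nonneg_left hlog (by linarith)
    have h11 : 4 * X * (X ^ ε / ε) = (4 / ε) * X ^ ((1:ℝ) + ε) := by
      rw [hXe]; field_simp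
    linarith
  have h12 : 9 * X ≤ 9 * X ^ ((1:ℝ) + ε) := by linarith
  calc 9 * X + 4 * X * Real.log X ≤ 9 * X ^ ((1:ℝ) + ε) + (4 / ε) * X ^ ((1:ℝ) + ε) := by
        linarith
    _ = (9 + 4 / ε) * X ^ ((1:ℝ) + ε) := by ring
end

section
/- Let f = (a,b,c,d,e) be an integral binary quartic form with a ≠ 0, and set H = 8ac − 3b^2, R = b^3 + 8a^2 d − 4abc, J = J(f), and assume R ≠ 0. Suppose u' ∈ ℤ is such that (u' : 4a) is a root of f in P^1(ℚ) and every root of f in P^1(ℚ) equals (u' : 4a). Set u = −u' − b and v = (u^2 + H)/2 ∈ ℚ. Then (4a)^3 · J = 2H^3 − 9Hv^2 + 3(uH)^2 − 3(3R − uH)^2. -/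
/-- Evaluation over `ℚ` of the integral binary quartic form with coefficients
`(a,b,c,d,e)`. -/
def evalQ (a b c d e : ℤ) (x y : ℚ) : ℚ :=
  (a : ℚ) * x ^ 4 + (b : ℚ) * x ^ 3 * y + (c : ℚ) * x ^ 2 * y ^ 2 +
    (d : ℚ) * x * y ^ 3 + (e : ℚ) * y ^ 4

/-- Relation between the `J`-invariant of a binary quartic form with a unique root
`(u' : 4a)` in `ℙ¹(ℚ)` and its semi-invariants: with `H = 8ac - 3b²`,
`R = b³ + 8a²d - 4abc ≠ 0`, `u = -u' - b` and `v = (u² + H)/2`, one has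
`(4a)³ J = 2H³ - 9Hv² + 3(uH)² - 3(3R - uH)²`. -/
theorem J_of_unique_root (a b c d e u' H R J u : ℤ) (v : ℚ) (ha : a ≠ 0)
    (hH : H = 8 * a * c - 3 * b ^ 2)
    (hRdef : R = b ^ 3 + 8 * a ^ 2 * d - 4 * a * b * c) (hR : R ≠ 0)
    (hJ : J = 72 * a * c * e + 9 * b * c * d - 27 * a * d ^ 2 - 27 * e * b ^ 2 - 2 * c ^ 3)
    (hu : u = -u' - b) (hv : v = ((u : ℚ) ^ 2 + (H : ℚ)) / 2)
    (hroot : evalQ a b c d e (u' : ℚ) ((4 * a : ℤ) : ℚ) = 0)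
    (huniq : ∀ x y : ℚ, ¬(x = 0 ∧ y = 0) → evalQ a b c d e x y = 0 →
      ∃ t : ℚ, x = t * (u' : ℚ) ∧ y = t * ((4 * a : ℤ) : ℚ)) :
    ((4 * a : ℤ) : ℚ) ^ 3 * (J : ℚ) =
      2 * (H : ℚ) ^ 3 - 9 * (H : ℚ) * v ^ 2 + 3 * ((u : ℚ) * (H : ℚ)) ^ 2 -
        3 * (3 * (R : ℚ) - (u : ℚ) * (H : ℚ)) ^ 2 := by
  have ha' : (a : ℚ) ≠ 0 := Int.cast_ne_zero.mpr ha
  rw [evalQ] at hroot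
  subst hH hRdef hJ hu hv
  push_cast at hroot ⊢
  have he : (e : ℚ) = -((a:ℚ)*u'^4 + 4*a*b*u'^3 + 16*a^2*c*u'^2 + 64*a^3*d*u')/(256*a^4) := by
    rw [eq_div_iff (mul_ne_zero (by norm_num) (pow_ne_zero _ ha'))]
    linear_combination hroot
  rw [he]
  field_simp
  ring
end
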